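/- Let R be a commutative local ring with maximal ideal P and A a proper ideal of R. Then R/A is RD-flat if and only if the set A* of nonzero principal ideals contained in A is directed under inclusion (i.e., any two principal ideals contained in A are contained in a common principal ideal contained in A). -/

import Mathlib

universe u

open MulOpposite

section RDDefsComm

variable (R : Type u) [CommRing R]

/-- `IsTensorZeroC R M N l` encodes the statement `∑ mᵢ ⊗ nᵢ = 0` in `M ⊗_R N`
(modules over a commutative ring `R`), via the universal property of the tensor
product: every `R`-balanced biadditive map kills the sum. -/
def IsTensorZeroC (M N : Type u) [AddCommGroup M] [Module R M]
    [AddCommGroup N] [Module R N] (l : List (M × N)) : Prop :=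
  ∀ (A : Type u) [AddCommGroup A], ∀ b : M → N → A,
    (∀ m₁ m₂ n, b (m₁ + m₂) n = b m₁ n + b m₂ n) →
    (∀ m n₁ n₂, b m (n₁ + n₂) = b m n₁ + b m n₂) →
    (∀ (r : R) (m : M) (n : N), b (r • m) n = b m (r • n)) →
    (l.map fun p => b p.1 p.2).sum = 0

/-- An `R`-module `M` (over a commutative ring) is RD-flat if tensoring with `M`
preserves exactness of all RD-exact sequences; equivalently, for every injective
linear map `f : H → F` whose image is a relatively divisible submodule
(`rF ∩ f(H) = r f(H)` for all `r`), the induced map `M ⊗ H → M ⊗ F` is injective. -/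
def RDFlatC (M : Type u) [AddCommGroup M] [Module R M] : Prop :=
  ∀ (H F : Type u) [AddCommGroup H] [Module R H] [AddCommGroup F] [Module R F],
    ∀ f : H →ₗ[R] F, Function.Injective f →
    (∀ (r : R) (h : H) (y : F), f h = r • y → ∃ h' : H, h = r • h') →
    ∀ l : List (M × H),
      IsTensorZeroC R M F (l.map fun p => (p.1, f p.2)) → IsTensorZeroC R M H l

/-- An `R`-module `N` is RD-injective if every homomorphism into `N` from a
relatively divisible submodule of an `R`-module extends to the whole module. -/
def RDInjectiveC (N : Type u) [AddCommGroup N] [Module R N] : Prop :=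
  ∀ (K L : Type u) [AddCommGroup K] [Module R K] [AddCommGroup L] [Module R L],
    ∀ f : K →ₗ[R] L, Function.Injective f →
    (∀ (r : R) (k : K) (y : L), f k = r • y → ∃ k' : K, k = r • k') →
    ∀ g : K →ₗ[R] N, ∃ h : L →ₗ[R] N, h.comp f = g

/-- An injective linear map `f : K → L` of `R`-modules is pure if every finite
system of linear equations with constants in `K` which is solvable in `L` is
solvable in `K`. -/
def IsPureC {K L : Type u} [AddCommGroup K] [Module R K] [AddCommGroup L]
    [Module R L] (f : K →ₗ[R] L) : Prop :=
  ∀ (m n : ℕ) (a : Fin m → Fin n → R) (k : Fin m → K),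
    (∃ x : Fin n → L, ∀ i, (∑ j, a i j • x j) = f (k i)) →
    ∃ y : Fin n → K, ∀ i, (∑ j, a i j • y j) = k i

/-- An `R`-module `M` is RD-coflat if every RD-exact sequence `0 → M → P → Q → 0`
is pure-exact, i.e. whenever `M` embeds as a relatively divisible submodule of a
module `P`, it is a pure submodule of `P`. -/
def RDCoflatC (M : Type u) [AddCommGroup M] [Module R M] : Prop :=
  ∀ (P : Type u) [AddCommGroup P] [Module R P],
    ∀ f : M →ₗ[R] P, Function.Injective f →
    (∀ (r : R) (x : M) (y : P), f x = r • y → ∃ x' : M, x = r • x') →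
    IsPureC R f

/-- An `R`-module `F` is RD-projective if every homomorphism from `F` to a quotient
in an RD-exact sequence (the kernel is a relatively divisible submodule) lifts. -/
def RDProjectiveC (F : Type u) [AddCommGroup F] [Module R F] : Prop :=
  ∀ (L Q : Type u) [AddCommGroup L] [Module R L] [AddCommGroup Q] [Module R Q],
    ∀ p : L →ₗ[R] Q, Function.Surjective p →
    (∀ (r : R) (x : L), p x = 0 → (∃ y : L, x = r • y) →
      ∃ z : L, p z = 0 ∧ x = r • z) →
    ∀ g : F →ₗ[R] Q, ∃ h : F →ₗ[R] L, p.comp h = g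

end RDDefsComm

section Tensor

open TensorProduct

variable {R : Type u} [CommRing R]
variable {M N : Type u} [AddCommGroup M] [Module R M] [AddCommGroup N] [Module R N]

theorem isTensorZeroC_iff (l : List (M × N)) :
    IsTensorZeroC R M N l ↔ (l.map fun p => p.1 ⊗ₜ[R] p.2).sum = 0 := by
  constructor
  · intro h
    have := h (M ⊗[R] N) (fun m n => m ⊗ₜ n)
      (fun m₁ m₂ n => TensorProduct.add_tmul m₁ m₂ n)
      (fun m n₁ n₂ => TensorProduct.tmul_add m n₁ n₂)
      (fun r m n => TensorProduct.smul_tmul r m n)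
    exact this
  · intro h A' _ b hb1 hb2 hb3
    have hbz2 : ∀ m : M, b m 0 = 0 := by
      intro m
      have h0 : b m 0 = b m 0 + b m 0 := by
        conv_lhs => rw [show (0 : N) = 0 + 0 by rw [add_zero]]
        exact hb2 m 0 0
      exact left_eq_add.mp h0
    have hbz1 : ∀ n : N, b 0 n = 0 := by
      intro n
      have h0 : b 0 n = b 0 n + b 0 n := by
        conv_lhs => rw [show (0 : M) = 0 + 0 by rw [add_zero]]
        exact hb1 0 0 n
      exact left_eq_add.mp h0
    let f : M →+ N →+ A' :=
      { toFun := fun m =>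
          { toFun := fun n => b m n
            map_zero' := hbz2 m
            map_add' := fun n₁ n₂ => hb2 m n₁ n₂ }
        map_zero' := by ext n; exact hbz1 n
        map_add' := fun m₁ m₂ => by
          ext n; exact hb1 m₁ m₂ n }
    let B : M ⊗[R] N →+ A' := TensorProduct.liftAddHom f (fun r m n => hb3 r m n)
    have hB : ∀ p : M × N, B (p.1 ⊗ₜ p.2) = b p.1 p.2 := fun p =>
      TensorProduct.liftAddHom_tmul f (fun r m n => hb3 r m n) p.1 p.2
    have hmap : l.map (fun p => b p.1 p.2) = (l.map (fun p => p.1 ⊗ₜ[R] p.2)).map B := by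
      rw [List.map_map]
      exact List.map_congr_left (fun p _ => (hB p).symm)
    rw [hmap, ← map_list_sum, h, map_zero]

end Tensor

section Bridge

open TensorProduct

variable {R : Type u} [CommRing R]

/-- Every list over a quotient lifts. -/
lemma exists_list_lift {H : Type u} (A : Ideal R) (l : List ((R ⧸ A) × H)) :
    ∃ l' : List (R × H), l = l'.map fun q => (Ideal.Quotient.mk A q.1, q.2) := by
  induction l with
  | nil => exact ⟨[], rfl⟩
  | cons p l ih =>
    obtain ⟨l', rfl⟩ := ih
    obtain ⟨r, hr⟩ := Ideal.Quotient.mk_surjective (I := A) p.1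
    exact ⟨(r, p.2) :: l', by simp [hr]⟩

lemma mk_list_sum {N : Type u} [AddCommGroup N] [Module R N] (S : Submodule R N)
    {α : Type*} (g : α → N) (l : List α) :
    (Submodule.Quotient.mk ((l.map g).sum) : N ⧸ S) =
      (l.map fun x => (Submodule.Quotient.mk (g x) : N ⧸ S)).sum := by
  induction l with
  | nil => simp
  | cons a l ih => simp [Submodule.Quotient.mk_add, ih]

lemma tensorZero_quot_iff (A : Ideal R) {N : Type u} [AddCommGroup N] [Module R N]
    (l' : List (R × N)) :
    IsTensorZeroC R (R ⧸ A) N (l'.map fun q => (Ideal.Quotient.mk A q.1, q.2)) ↔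
      (l'.map fun q => q.1 • q.2).sum ∈ (A • ⊤ : Submodule R N) := by
  rw [isTensorZeroC_iff]
  rw [List.map_map]
  let e := TensorProduct.quotTensorEquivQuotSMul N A
  have he : ∀ q : R × N, e (Ideal.Quotient.mk A q.1 ⊗ₜ[R] q.2) =
      Submodule.Quotient.mk (q.1 • q.2) :=
    fun q => TensorProduct.quotTensorEquivQuotSMul_mk_tmul A q.1 q.2
  constructor
  · intro h
    have h2 : e ((l'.map fun q => (Ideal.Quotient.mk A q.1) ⊗ₜ[R] q.2).sum) = 0 := by
      have : (l'.map ((fun p : (R ⧸ A) × N => p.1 ⊗ₜ[R] p.2) ∘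
          fun q : R × N => (Ideal.Quotient.mk A q.1, q.2))).sum = 0 := h
      simpa [Function.comp_def] using congrArg e this
    rw [map_list_sum] at h2
    rw [List.map_map] at h2
    have h3 : (l'.map fun q => (Submodule.Quotient.mk (q.1 • q.2) :
        N ⧸ (A • ⊤ : Submodule R N))).sum = 0 := by
      rw [← h2]; congr 1
    have h4 : (Submodule.Quotient.mk ((l'.map fun q => q.1 • q.2).sum) :
        N ⧸ (A • ⊤ : Submodule R N)) = 0 := by
      rw [mk_list_sum, ← h3]
    exact (Submodule.Quotient.mk_eq_zero _).mp h4
  · intro h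
    have h4 : (Submodule.Quotient.mk ((l'.map fun q => q.1 • q.2).sum) :
        N ⧸ (A • ⊤ : Submodule R N)) = 0 := (Submodule.Quotient.mk_eq_zero _).mpr h
    have h2 : e ((l'.map fun q => (Ideal.Quotient.mk A q.1) ⊗ₜ[R] q.2).sum) = 0 := by
      rw [map_list_sum, List.map_map]
      rw [mk_list_sum (A • ⊤ : Submodule R N) (fun q : R × N => q.1 • q.2) l'] at h4
      rw [← h4]
      exact congrArg List.sum (List.map_congr_left fun q _ => he q)
    have := congrArg e.symm h2
    simpa [Function.comp_def] using this

end Bridge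

section Backward

variable {R : Type u} [CommRing R] [IsLocalRing R]

lemma exists_smul_form {A : Ideal R}
    (hdir : ∀ a b : R, a ≠ 0 → b ≠ 0 → Ideal.span {a} ≤ A → Ideal.span {b} ≤ A →
      ∃ c : R, c ≠ 0 ∧ Ideal.span {c} ≤ A ∧
        Ideal.span {a} ≤ Ideal.span {c} ∧ Ideal.span {b} ≤ Ideal.span {c})
    {N : Type u} [AddCommGroup N] [Module R N]
    {z : N} (hz : z ∈ (A • ⊤ : Submodule R N)) : ∃ c ∈ A, ∃ y : N, z = c • y := by
  refine Submodule.smul_induction_on hz ?_ ?_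
  · intro a ha n _
    exact ⟨a, ha, n, rfl⟩
  · rintro x y ⟨c₁, hc₁A, y₁, rfl⟩ ⟨c₂, hc₂A, y₂, rfl⟩
    rcases eq_or_ne c₁ 0 with rfl | h₁
    · exact ⟨c₂, hc₂A, y₂, by simp⟩
    rcases eq_or_ne c₂ 0 with rfl | h₂
    · exact ⟨c₁, hc₁A, y₁, by simp⟩
    obtain ⟨c, hc0, hcA, hc₁, hc₂⟩ := hdir c₁ c₂ h₁ h₂
      ((Ideal.span_singleton_le_iff_mem A).mpr hc₁A)
      ((Ideal.span_singleton_le_iff_mem A).mpr hc₂A)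
    obtain ⟨u₁, hu₁⟩ := Ideal.mem_span_singleton'.mp (hc₁ (Ideal.mem_span_singleton_self c₁))
    obtain ⟨u₂, hu₂⟩ := Ideal.mem_span_singleton'.mp (hc₂ (Ideal.mem_span_singleton_self c₂))
    refine ⟨c, (Ideal.span_singleton_le_iff_mem A).mp hcA, u₁ • y₁ + u₂ • y₂, ?_⟩
    rw [smul_add, smul_smul, smul_smul, mul_comm c u₁, mul_comm c u₂, hu₁, hu₂]

lemma backward (A : Ideal R)
    (hdir : ∀ a b : R, a ≠ 0 → b ≠ 0 → Ideal.span {a} ≤ A → Ideal.span {b} ≤ A →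
      ∃ c : R, c ≠ 0 ∧ Ideal.span {c} ≤ A ∧
        Ideal.span {a} ≤ Ideal.span {c} ∧ Ideal.span {b} ≤ Ideal.span {c}) :
    RDFlatC R (R ⧸ A) := by
  intro H F _ _ _ _ f hinj hRD l hT
  obtain ⟨l', rfl⟩ := exists_list_lift A l
  -- rewrite the mapped list
  have hml : (l'.map fun q => ((Ideal.Quotient.mk A q.1 : R ⧸ A), q.2)).map
      (fun p => (p.1, f p.2)) =
      (l'.map fun q => (q.1, f q.2)).map fun q => (Ideal.Quotient.mk A q.1, q.2) := by
    rw [List.map_map, List.map_map]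
    exact List.map_congr_left fun q _ => rfl
  rw [hml] at hT
  rw [tensorZero_quot_iff] at hT
  have hsum : ((l'.map fun q => (q.1, f q.2)).map fun q : R × F => q.1 • q.2).sum =
      f ((l'.map fun q => q.1 • q.2).sum) := by
    rw [map_list_sum, List.map_map, List.map_map]
    congr 1
    exact List.map_congr_left fun q _ => by simp [map_smul]
  rw [hsum] at hT
  obtain ⟨c, hcA, y, hy⟩ := exists_smul_form hdir hT
  obtain ⟨h', hh'⟩ := hRD c _ y hy
  rw [tensorZero_quot_iff]
  rw [hh']
  exact Submodule.smul_mem_smul hcA Submodule.mem_top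

end Backward

section CharLemmas

variable {R : Type u} [CommRing R]
variable {P : Type u} [AddCommGroup P] [Module R P]

/-- A character vanishing on a submodule factors through the quotient. -/
lemma char_factor (S : Submodule R P) (χ : CharacterModule P)
    (h : ∀ s ∈ S, χ s = 0) :
    ∃ χ' : CharacterModule (P ⧸ S), ∀ p : P, χ' (Submodule.Quotient.mk p) = χ p := by
  refine ⟨QuotientAddGroup.lift S.toAddSubgroup χ h, fun p => rfl⟩

/-- A character vanishing on the kernel of `a • ·` is a multiple of `a`. -/
lemma char_divides (a : R) (ψ : CharacterModule P)
    (h : ∀ p : P, a • p = 0 → ψ p = 0) :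
    ∃ φ : CharacterModule P, ψ = a • φ := by
  set S : Submodule R P := LinearMap.ker (LinearMap.lsmul R P a) with hS
  obtain ⟨ψ', hψ'⟩ := char_factor S ψ (fun s hs => h s (by simpa [hS] using hs))
  set j : (P ⧸ S) →ₗ[R] P := Submodule.liftQ S (LinearMap.lsmul R P a) le_rfl with hj
  have hjinj : Function.Injective j := by
    rw [← LinearMap.ker_eq_bot, hj]
    exact Submodule.ker_liftQ_eq_bot S _ _ le_rfl
  obtain ⟨Φ, hΦ⟩ := CharacterModule.dual_surjective_of_injective j hjinj ψ'
  refine ⟨Φ, ?_⟩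
  ext p
  have h1 : Φ (j (Submodule.Quotient.mk p)) = ψ' (Submodule.Quotient.mk p) :=
    DFunLike.congr_fun hΦ (Submodule.Quotient.mk p)
  have h2 : j (Submodule.Quotient.mk p) = a • p := rfl
  rw [CharacterModule.smul_apply, ← h2, h1, hψ']

/-- A character vanishing on an intersection splits as a sum. -/
lemma char_split (X Y : Submodule R P) (ψ : CharacterModule P)
    (h : ∀ p ∈ X ⊓ Y, ψ p = 0) :
    ∃ ψ₁ ψ₂ : CharacterModule P, ψ = ψ₁ + ψ₂ ∧
      (∀ p ∈ X, ψ₁ p = 0) ∧ (∀ p ∈ Y, ψ₂ p = 0) := by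
  obtain ⟨ψ', hψ'⟩ := char_factor (X ⊓ Y) ψ h
  set Φ0 : P →ₗ[R] (P ⧸ X) × (P ⧸ Y) := LinearMap.prod X.mkQ Y.mkQ with hΦ0
  have hker : LinearMap.ker Φ0 = X ⊓ Y := by
    rw [hΦ0, LinearMap.ker_prod, Submodule.ker_mkQ, Submodule.ker_mkQ]
  set j : (P ⧸ (X ⊓ Y)) →ₗ[R] (P ⧸ X) × (P ⧸ Y) :=
    Submodule.liftQ (X ⊓ Y) Φ0 (le_of_eq hker.symm) with hj
  have hjinj : Function.Injective j := by
    rw [← LinearMap.ker_eq_bot, hj]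
    exact Submodule.ker_liftQ_eq_bot _ _ _ (le_of_eq hker)
  obtain ⟨Φ, hΦ⟩ := CharacterModule.dual_surjective_of_injective j hjinj ψ'
  have hΦap : ∀ q : P ⧸ (X ⊓ Y), Φ (j q) = ψ' q :=
    fun q => DFunLike.congr_fun hΦ q
  refine ⟨Φ.comp ((AddMonoidHom.inl (P ⧸ X) (P ⧸ Y)).comp X.mkQ.toAddMonoidHom),
          Φ.comp ((AddMonoidHom.inr (P ⧸ X) (P ⧸ Y)).comp Y.mkQ.toAddMonoidHom),
          ?_, ?_, ?_⟩
  · ext p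
    have h2 : j (Submodule.Quotient.mk p) = (Submodule.Quotient.mk p, Submodule.Quotient.mk p) :=
      rfl
    have h3 : ((Submodule.Quotient.mk p : P ⧸ X), (Submodule.Quotient.mk p : P ⧸ Y)) =
        ((Submodule.Quotient.mk p : P ⧸ X), 0) + (0, (Submodule.Quotient.mk p : P ⧸ Y)) := by
      simp
    have := hΦap (Submodule.Quotient.mk p)
    rw [h2, hψ'] at this
    show ψ p = Φ ((Submodule.Quotient.mk p : P ⧸ X), (0 : P ⧸ Y)) +
        Φ ((0 : P ⧸ X), (Submodule.Quotient.mk p : P ⧸ Y))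
    rw [← map_add, ← h3, this]
  · intro p hp
    have h0 : (Submodule.Quotient.mk p : P ⧸ X) = 0 := (Submodule.Quotient.mk_eq_zero _).mpr hp
    show Φ ((AddMonoidHom.inl (P ⧸ X) (P ⧸ Y)) (X.mkQ p)) = 0
    rw [Submodule.mkQ_apply, h0, map_zero, map_zero]
  · intro p hp
    have h0 : (Submodule.Quotient.mk p : P ⧸ Y) = 0 := (Submodule.Quotient.mk_eq_zero _).mpr hp
    show Φ ((AddMonoidHom.inr (P ⧸ X) (P ⧸ Y)) (Y.mkQ p)) = 0
    rw [Submodule.mkQ_apply, h0, map_zero, map_zero]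

end CharLemmas

section Sigma

open TensorProduct

variable {R : Type u} [CommRing R]
variable {M : Type u} [AddCommGroup M] [Module R M]

/-- RD-flatness gives kernel-triviality of `lTensor` along RD-monomorphisms. -/
lemma rdflat_lTensor_ker (hflat : RDFlatC R M)
    {H F : Type u} [AddCommGroup H] [Module R H] [AddCommGroup F] [Module R F]
    (f : H →ₗ[R] F) (hinj : Function.Injective f)
    (hRD : ∀ (r : R) (h : H) (y : F), f h = r • y → ∃ h' : H, h = r • h') :
    Function.Injective (LinearMap.lTensor M f) := by
  rw [← LinearMap.ker_eq_bot]
  rw [Submodule.eq_bot_iff]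
  intro z hz
  rw [LinearMap.mem_ker] at hz
  -- represent z as a list of simple tensors
  obtain ⟨l, rfl⟩ : ∃ l : List (M × H), z = (l.map fun p => p.1 ⊗ₜ[R] p.2).sum := by
    clear hz
    induction z using TensorProduct.induction_on with
    | zero => exact ⟨[], rfl⟩
    | tmul m h => exact ⟨[(m, h)], by simp⟩
    | add x y hx hy =>
      obtain ⟨lx, rfl⟩ := hx
      obtain ⟨ly, rfl⟩ := hy
      exact ⟨lx ++ ly, by simp⟩
  have hz1 : (((l.map fun p => (p.1, f p.2)).map fun p => p.1 ⊗ₜ[R] p.2)).sum = 0 := by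
    calc (((l.map fun p => (p.1, f p.2)).map fun p => p.1 ⊗ₜ[R] p.2)).sum
        = LinearMap.lTensor M f ((l.map fun p => p.1 ⊗ₜ[R] p.2).sum) := by
          rw [map_list_sum, List.map_map, List.map_map]
          exact congrArg List.sum (List.map_congr_left fun p _ => by simp)
      _ = 0 := hz
  have hz' : IsTensorZeroC R M F (l.map fun p => (p.1, f p.2)) :=
    (isTensorZeroC_iff _).mpr hz1
  have := hflat H F f hinj hRD l hz'
  exact (isTensorZeroC_iff l).mp this

/-- The evaluation character on `M ⊗ M⋆`. -/
noncomputable def evChar : CharacterModule (M ⊗[R] CharacterModule M) :=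
  TensorProduct.liftAddHom
    { toFun := fun m =>
        { toFun := fun χ => χ m
          map_zero' := rfl
          map_add' := fun χ χ' => rfl }
      map_zero' := by ext χ; exact map_zero χ
      map_add' := fun m m' => by ext χ; exact map_add χ m m' }
    (fun r m χ => rfl)

@[simp] lemma evChar_tmul (m : M) (χ : CharacterModule M) :
    (evChar : CharacterModule (M ⊗[R] CharacterModule M)) (m ⊗ₜ χ) = χ m :=
  TensorProduct.liftAddHom_tmul _ _ m χ

/-- From RD-flatness of `M` and an RD-epimorphism `ε : P → M`, the dual map
`M⋆ → P⋆` admits a retraction. -/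
lemma exists_retraction (hflat : RDFlatC R M)
    {Pm : Type u} [AddCommGroup Pm] [Module R Pm] (ε : Pm →ₗ[R] M)
    (hsurj : Function.Surjective ε)
    (hK : ∀ (r : R) (k : Pm), ε k = 0 → ∀ y : Pm, k = r • y →
      ∃ k' : Pm, ε k' = 0 ∧ k = r • k') :
    ∃ σ : CharacterModule Pm →ₗ[R] CharacterModule M,
      ∀ χ : CharacterModule M, σ (CharacterModule.dual ε χ) = χ := by
  set εd : CharacterModule M →ₗ[R] CharacterModule Pm := CharacterModule.dual ε with hεd
  have hinj : Function.Injective εd := by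
    intro χ χ' h
    ext m
    obtain ⟨p, rfl⟩ := hsurj m
    exact DFunLike.congr_fun h p
  have hRD : ∀ (r : R) (χ : CharacterModule M) (ψ : CharacterModule Pm),
      εd χ = r • ψ → ∃ χ'' : CharacterModule M, χ = r • χ'' := by
    intro r χ ψ h
    have hker : ∀ y : M, r • y = 0 → χ y = 0 := by
      intro y hy
      obtain ⟨p, rfl⟩ := hsurj y
      have hk : ε (r • p) = 0 := by rw [map_smul, hy]
      obtain ⟨k', hk'0, hk'⟩ := hK r (r • p) hk p rfl
      have e1 : χ (ε p) = ψ (r • p) := DFunLike.congr_fun h p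
      have e2 : ψ (r • p) = ψ (r • k') := by rw [← hk']
      have e3 : ψ (r • k') = χ (ε k') := (DFunLike.congr_fun h k').symm
      rw [e1, e2, e3, hk'0, map_zero]
    obtain ⟨φ, hφ⟩ := char_divides r χ (fun y hy => hker y (by simpa using hy))
    exact ⟨φ, hφ⟩
  have hlt : Function.Injective (LinearMap.lTensor M εd) :=
    rdflat_lTensor_ker hflat εd hinj hRD
  obtain ⟨E', hE'⟩ := CharacterModule.dual_surjective_of_injective
    (LinearMap.lTensor M εd) hlt (evChar (R := R) (M := M))
  have hE'ap : ∀ z : M ⊗[R] CharacterModule M,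
      E' (LinearMap.lTensor M εd z) = evChar z := fun z => DFunLike.congr_fun hE' z
  refine ⟨{
      toFun := fun ψ =>
        E'.comp ((TensorProduct.mk R M (CharacterModule Pm)).flip ψ).toAddMonoidHom
      map_add' := fun ψ ψ' => by
        ext m
        show E' (m ⊗ₜ (ψ + ψ')) = E' (m ⊗ₜ ψ) + E' (m ⊗ₜ ψ')
        rw [TensorProduct.tmul_add, map_add]
      map_smul' := fun r ψ => by
        ext m
        show E' (m ⊗ₜ (r • ψ)) = E' ((r • m) ⊗ₜ ψ)
        exact congrArg E' (TensorProduct.smul_tmul r m ψ).symm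
    }, ?_⟩
  intro χ
  ext m
  show E' (m ⊗ₜ (εd χ)) = χ m
  have : (m ⊗ₜ (εd χ) : M ⊗[R] CharacterModule Pm) =
      LinearMap.lTensor M εd (m ⊗ₜ χ) := by simp
  rw [this, hE'ap, evChar_tmul]

end Sigma

section Cover

open DirectSum

variable {R : Type u} [CommRing R] (A : Ideal R)

/-- Index type for the canonical RD-cover of `R ⧸ A`. -/
abbrev CoverIdx : Type u := {q : R × (R ⧸ A) // q.1 • q.2 = 0}

noncomputable instance : DecidableEq (CoverIdx A) := Classical.decEq _

/-- The canonical RD-cover of `R ⧸ A`: a direct sum of cyclically presented modules. -/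
abbrev CoverMod : Type u := ⨁ (i : CoverIdx A), R ⧸ Ideal.span {i.1.1}

/-- Component maps of the cover. -/
noncomputable def coverComp (i : CoverIdx A) : (R ⧸ Ideal.span {i.1.1}) →ₗ[R] R ⧸ A :=
  Submodule.liftQ _ (LinearMap.toSpanSingleton R (R ⧸ A) i.1.2) (by
    rw [Ideal.span_le]
    intro x hx
    rw [Set.mem_singleton_iff] at hx
    subst hx
    simpa [LinearMap.toSpanSingleton] using i.2)

/-- The canonical RD-epimorphism onto `R ⧸ A`. -/
noncomputable def coverMap : CoverMod A →ₗ[R] R ⧸ A :=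
  DirectSum.toModule R _ _ (coverComp A)

lemma coverMap_lof (i : CoverIdx A) (x : R) :
    coverMap A (DirectSum.lof R _ _ i (Ideal.Quotient.mk (Ideal.span {i.1.1}) x)) =
      x • i.1.2 := by
  rw [coverMap, DirectSum.toModule_lof]
  rfl

lemma coverMap_surjective : Function.Surjective (coverMap A) := by
  intro w
  refine ⟨DirectSum.lof R _ _ (⟨(0, w), by simp⟩ : CoverIdx A)
    (Ideal.Quotient.mk _ 1), ?_⟩
  rw [coverMap_lof]
  simp

lemma coverMap_rd : ∀ (r : R) (k : CoverMod A), coverMap A k = 0 →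
    ∀ y : CoverMod A, k = r • y →
    ∃ k' : CoverMod A, coverMap A k' = 0 ∧ k = r • k' := by
  intro r k hk y hky
  have hry : r • coverMap A y = 0 := by
    rw [← map_smul, ← hky, hk]
  set i₀ : CoverIdx A := ⟨(r, coverMap A y), hry⟩ with hi₀
  set q : CoverMod A := DirectSum.lof R _ _ i₀ (Ideal.Quotient.mk _ 1) with hq
  have hεq : coverMap A q = coverMap A y := by
    rw [hq, coverMap_lof]
    exact one_smul _ _
  have hrq : r • q = 0 := by
    rw [hq, ← map_smul]
    have h2 : r • (Ideal.Quotient.mk (Ideal.span {i₀.1.1}) 1) = 0 := by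
      have h3 : r • (Ideal.Quotient.mk (Ideal.span {i₀.1.1}) 1) =
          Ideal.Quotient.mk (Ideal.span {i₀.1.1}) (r • 1) :=
        (Submodule.Quotient.mk_smul _ r 1).symm
      rw [h3, smul_eq_mul, mul_one, Ideal.Quotient.eq_zero_iff_mem]
      exact Ideal.mem_span_singleton_self r
    rw [h2, map_zero]
  refine ⟨y - q, ?_, ?_⟩
  · rw [map_sub, hεq, sub_self]
  · rw [smul_sub, hrq, sub_zero, hky]

end Cover

section Forward

open TensorProduct

variable {R : Type u} [CommRing R] (A : Ideal R)

lemma forward_exists_p (hflat : RDFlatC R (R ⧸ A)) (a b : R) (haA : a ∈ A) (hbA : b ∈ A) :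
    ∃ p : CoverMod A, coverMap A p = Ideal.Quotient.mk A 1 ∧ a • p = 0 ∧ b • p = 0 := by
  by_contra hcon
  push_neg at hcon
  set P := CoverMod A
  set ε := coverMap A with hε
  set X : Submodule R P := LinearMap.ker (LinearMap.lsmul R P a) with hX
  set Y : Submodule R P := LinearMap.ker (LinearMap.lsmul R P b) with hY
  set W : Submodule R (R ⧸ A) := Submodule.map ε (X ⊓ Y) with hW
  have h1W : (Ideal.Quotient.mk A 1 : R ⧸ A) ∉ W := by
    intro hmem
    obtain ⟨p, hpT, hp1⟩ := hmem
    have hpT' : p ∈ X ⊓ Y := hpT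
    rw [Submodule.mem_inf, LinearMap.mem_ker, LinearMap.mem_ker] at hpT'
    exact hcon p hp1 (by exact hpT'.1) (by exact hpT'.2)
  have hmk1 : (Submodule.Quotient.mk (Ideal.Quotient.mk A 1) : (R ⧸ A) ⧸ W) ≠ 0 :=
    fun h => h1W ((Submodule.Quotient.mk_eq_zero _).mp h)
  obtain ⟨χ₀, hχ₀⟩ := CharacterModule.exists_character_apply_ne_zero_of_ne_zero hmk1
  set χ : CharacterModule (R ⧸ A) := χ₀.comp W.mkQ.toAddMonoidHom with hχ
  have hχ1 : χ (Ideal.Quotient.mk A 1) ≠ 0 := hχ₀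
  set ψ : CharacterModule P := CharacterModule.dual ε χ with hψ
  have hψT : ∀ p ∈ X ⊓ Y, ψ p = 0 := by
    intro p hp
    show χ (ε p) = 0
    have : ε p ∈ W := ⟨p, hp, rfl⟩
    show χ₀ (W.mkQ (ε p)) = 0
    rw [Submodule.mkQ_apply, (Submodule.Quotient.mk_eq_zero _).mpr this, map_zero]
  obtain ⟨ψ₁, ψ₂, hsum, hψ₁, hψ₂⟩ := char_split X Y ψ hψT
  obtain ⟨φ₁, hφ₁⟩ := char_divides a ψ₁ (fun p hp => hψ₁ p (by simpa [hX] using hp))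
  obtain ⟨φ₂, hφ₂⟩ := char_divides b ψ₂ (fun p hp => hψ₂ p (by simpa [hY] using hp))
  obtain ⟨σ, hσ⟩ := exists_retraction hflat ε (coverMap_surjective A) (coverMap_rd A)
  have hχeq : χ = a • (σ φ₁) + b • (σ φ₂) := by
    have : σ ψ = χ := hσ χ
    rw [← this, hsum, hφ₁, hφ₂, map_add, map_smul, map_smul]
  have : χ (Ideal.Quotient.mk A 1) = 0 := by
    rw [hχeq]
    show (a • (σ φ₁)) (Ideal.Quotient.mk A 1) + (b • (σ φ₂)) (Ideal.Quotient.mk A 1) = 0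
    rw [CharacterModule.smul_apply, CharacterModule.smul_apply]
    have ha0 : a • (Ideal.Quotient.mk A 1 : R ⧸ A) = 0 := by
      show a • (Submodule.Quotient.mk (1 : R) : R ⧸ A) = 0
      rw [← Submodule.Quotient.mk_smul, smul_eq_mul, mul_one]
      exact (Submodule.Quotient.mk_eq_zero _).mpr haA
    have hb0 : b • (Ideal.Quotient.mk A 1 : R ⧸ A) = 0 := by
      show b • (Submodule.Quotient.mk (1 : R) : R ⧸ A) = 0
      rw [← Submodule.Quotient.mk_smul, smul_eq_mul, mul_one]
      exact (Submodule.Quotient.mk_eq_zero _).mpr hbA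
    rw [ha0, hb0, map_zero, map_zero, add_zero]
  exact hχ1 this

end Forward

section Extract

variable {R : Type u} [CommRing R] [IsLocalRing R] (A : Ideal R)

lemma quot_mk_mul (I : Ideal R) (r s : R) :
    Ideal.Quotient.mk I (r * s) = r • Ideal.Quotient.mk I s :=
  Submodule.Quotient.mk_smul I r s

lemma extract_c (hA : A ≠ ⊤) (a b : R) (ha : a ≠ 0)
    (p : CoverMod A) (hp1 : coverMap A p = Ideal.Quotient.mk A 1)
    (hpa : a • p = 0) (hpb : b • p = 0) :
    ∃ c : R, c ≠ 0 ∧ Ideal.span {c} ≤ A ∧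
      Ideal.span {a} ≤ Ideal.span {c} ∧ Ideal.span {b} ≤ Ideal.span {c} := by
  classical
  -- choose representatives
  have ht : ∀ i : CoverIdx A, ∃ t : R, Ideal.Quotient.mk (Ideal.span {i.1.1}) t = p i :=
    fun i => Ideal.Quotient.mk_surjective (p i)
  choose t htt using ht
  have hv : ∀ i : CoverIdx A, ∃ v : R, Ideal.Quotient.mk A v = i.1.2 :=
    fun i => Ideal.Quotient.mk_surjective i.1.2
  choose v hvv using hv
  -- decompose p over its support
  have hdec : (∑ i ∈ DFinsupp.support p, DirectSum.of _ i (p i)) = p :=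
    DirectSum.sum_support_of p
  have hε : ∑ i ∈ DFinsupp.support p, coverMap A (DirectSum.of _ i (p i)) =
      Ideal.Quotient.mk A 1 := by
    rw [← map_sum, hdec, hp1]
  have hεi : ∀ i : CoverIdx A, coverMap A (DirectSum.of _ i (p i)) =
      Ideal.Quotient.mk A (t i * v i) := by
    intro i
    rw [← htt i, ← DirectSum.lof_eq_of R, coverMap_lof, ← hvv i]
    rw [quot_mk_mul]
  have hsum : Ideal.Quotient.mk A (∑ i ∈ DFinsupp.support p, t i * v i) =
      Ideal.Quotient.mk A 1 := by
    rw [map_sum]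
    rw [← hε]
    exact Finset.sum_congr rfl (fun i _ => (hεi i).symm)
  have hmem : (∑ i ∈ DFinsupp.support p, t i * v i) - 1 ∈ A :=
    Ideal.Quotient.eq.mp hsum
  -- find a unit term using locality
  have hunit : ∃ i ∈ DFinsupp.support p, IsUnit (t i * v i) := by
    by_contra hall
    push_neg at hall
    have hsummem : (∑ i ∈ DFinsupp.support p, t i * v i) ∈ IsLocalRing.maximalIdeal R :=
      Ideal.sum_mem _ (fun i hi => hall i hi)
    have h1 : (1 : R) ∈ IsLocalRing.maximalIdeal R := by
      have := IsLocalRing.le_maximalIdeal hA hmem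
      have := Ideal.sub_mem _ hsummem this
      simpa using this
    exact (IsLocalRing.maximalIdeal.isMaximal R).ne_top (Ideal.eq_top_of_isUnit_mem _ h1 isUnit_one)
  obtain ⟨i, hi, hui⟩ := hunit
  have hti : IsUnit (t i) := isUnit_of_mul_isUnit_left hui
  have hvi : IsUnit (v i) := isUnit_of_mul_isUnit_right hui
  set c := i.1.1 with hc
  -- a ∈ span {c}
  have hcomp : ∀ x : R, x • p = 0 → x * t i ∈ Ideal.span {c} := by
    intro x hx
    have h1 : (x • p) i = 0 := by rw [hx]; rfl
    have h2 : x • (p i) = 0 := by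
      rw [← DFinsupp.smul_apply]
      exact h1
    rw [← htt i] at h2
    have h3 : Ideal.Quotient.mk (Ideal.span {c}) (x * t i) = 0 := by
      rw [quot_mk_mul]
      exact h2
    exact (Ideal.Quotient.eq_zero_iff_mem).mp h3
  have hmemspan : ∀ x : R, x • p = 0 → x ∈ Ideal.span {c} := by
    intro x hx
    obtain ⟨u, hu⟩ := hti
    have := hcomp x hx
    have h4 : (x * t i) * (↑u⁻¹ : R) ∈ Ideal.span {c} := Ideal.mul_mem_right _ _ this
    rwa [← hu, mul_assoc, Units.mul_inv, mul_one] at h4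
  have haspan : a ∈ Ideal.span {c} := hmemspan a hpa
  have hbspan : b ∈ Ideal.span {c} := hmemspan b hpb
  have hcA : c ∈ A := by
    have h5 : Ideal.Quotient.mk A (c * v i) = 0 := by
      rw [quot_mk_mul, hvv i]
      exact i.2
    have h6 : c * v i ∈ A := Ideal.Quotient.eq_zero_iff_mem.mp h5
    obtain ⟨u, hu⟩ := hvi
    have h7 : (c * v i) * (↑u⁻¹ : R) ∈ A := Ideal.mul_mem_right _ _ h6
    rwa [← hu, mul_assoc, Units.mul_inv, mul_one] at h7
  have hc0 : c ≠ 0 := by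
    intro h0
    rw [h0] at haspan
    rw [show Ideal.span ({0} : Set R) = ⊥ from Ideal.span_singleton_eq_bot.mpr rfl] at haspan
    exact ha (Submodule.mem_bot R |>.mp haspan)
  exact ⟨c, hc0, (Ideal.span_singleton_le_iff_mem A).mpr hcA,
    (Ideal.span_singleton_le_iff_mem _).mpr haspan,
    (Ideal.span_singleton_le_iff_mem _).mpr hbspan⟩

end Extract


/-- Let `R` be a commutative local ring and `A` a proper ideal of `R`.  Then `R/A` is
RD-flat if and only if the set of nonzero principal ideals contained in `A` is
directed under inclusion. -/
theorem quotient_rdFlat_iff_principal_directed (R : Type u) [CommRing R]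
    [IsLocalRing R] (A : Ideal R) (hA : A ≠ ⊤) :
    RDFlatC R (R ⧸ A) ↔
      ∀ a b : R, a ≠ 0 → b ≠ 0 → Ideal.span {a} ≤ A → Ideal.span {b} ≤ A →
        ∃ c : R, c ≠ 0 ∧ Ideal.span {c} ≤ A ∧
          Ideal.span {a} ≤ Ideal.span {c} ∧ Ideal.span {b} ≤ Ideal.span {c} := by
  constructor
  · intro hflat a b ha hb haA hbA
    obtain ⟨p, hp1, hpa, hpb⟩ := forward_exists_p A hflat a b
      ((Ideal.span_singleton_le_iff_mem A).mp haA)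
      ((Ideal.span_singleton_le_iff_mem A).mp hbA)
    exact extract_c A hA a b ha p hp1 hpa hpb
  · exact backward A
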